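/- For any δ ∈ (0,1), t > 0 and n ≥ 1, the iterated simplex integral ∫₀ᵗ dr_n ⋯ ∫₀^{r_2} dr_1 ∏_{i=0}^{n} (r_{i+1} - r_i)^{-δ}, with conventions r_0 = 0 and r_{n+1} = t, equals t^{n(1-δ) - δ} · Γ(1-δ)^{n+1} / Γ((n+1)(1-δ)). -/
import Mathlib


open intervalIntegral Real

/-- Iterated simplex integral `∫₀ᵗ dr_n ⋯ ∫₀^{r₂} dr₁ ∏_{i=0}^n (r_{i+1}-r_i)^{-δ}`
with conventions `r₀ = 0`, `r_{n+1} = t`; the base case carries the factor `r₁^{-δ}`. -/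
noncomputable def simplexIter' (δ : ℝ) : ℕ → ℝ → ℝ
  | 0, t => t ^ (-δ)
  | n + 1, t => ∫ r in (0:ℝ)..t, (t - r) ^ (-δ) * simplexIter' δ n r

lemma real_beta {a b : ℝ} (ha : 0 < a) (hb : 0 < b) {t : ℝ} (ht : 0 < t) :
    ∫ r in (0:ℝ)..t, r ^ (a - 1) * (t - r) ^ (b - 1) =
      t ^ (a + b - 1) * (Real.Gamma a * Real.Gamma b / Real.Gamma (a + b)) := by
  have hC := Complex.betaIntegral_scaled (a : ℂ) (b : ℂ) ht
  have hc : (∫ x in (0:ℝ)..t, (x : ℂ) ^ ((a:ℂ) - 1) * ((t:ℝ) - x : ℂ) ^ ((b:ℂ) - 1)) =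
      ((∫ r in (0:ℝ)..t, r ^ (a - 1) * (t - r) ^ (b - 1) : ℝ) : ℂ) := by
    rw [← intervalIntegral.integral_ofReal]
    apply intervalIntegral.integral_congr
    intro x hx
    rw [Set.uIcc_of_le ht.le] at hx
    have hx0 : (0:ℝ) ≤ x := hx.1
    have hx1 : (0:ℝ) ≤ t - x := by linarith [hx.2]
    show (x:ℂ) ^ ((a:ℂ) - 1) * ((t:ℝ) - x : ℂ) ^ ((b:ℂ) - 1)
      = ((x ^ (a - 1) * (t - x) ^ (b - 1) : ℝ) : ℂ)
    rw [Complex.ofReal_mul, Complex.ofReal_cpow hx0, Complex.ofReal_cpow hx1]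
    push_cast
    ring
  have hab : Complex.Gamma ((a:ℂ) + b) ≠ 0 := by
    rw [← Complex.ofReal_add, Complex.Gamma_ofReal]
    exact_mod_cast (Real.Gamma_pos_of_pos (by linarith)).ne'
  have hgam : Complex.betaIntegral a b =
      ((Real.Gamma a * Real.Gamma b / Real.Gamma (a + b) : ℝ) : ℂ) := by
    have h1 := Complex.Gamma_mul_Gamma_eq_betaIntegral
      (s := (a:ℂ)) (t := (b:ℂ)) (by simpa using ha) (by simpa using hb)
    push_cast [← Complex.Gamma_ofReal]
    rw [h1, mul_comm, mul_div_assoc, div_self hab, mul_one]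
  rw [hc, hgam] at hC
  have h2 : ((t ^ (a + b - 1) * (Real.Gamma a * Real.Gamma b / Real.Gamma (a + b)) : ℝ) : ℂ) =
      (t:ℂ) ^ ((a:ℂ) + b - 1) * ((Real.Gamma a * Real.Gamma b / Real.Gamma (a + b) : ℝ) : ℂ) := by
    rw [Complex.ofReal_mul, Complex.ofReal_cpow ht.le]
    push_cast
    ring_nf
  exact Complex.ofReal_injective (hC.trans h2.symm)

lemma simplexIter'_key (δ : ℝ) (hδ : δ ∈ Set.Ioo (0:ℝ) 1) (n : ℕ) :
    ∀ t : ℝ, 0 < t → simplexIter' δ n t =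
      t ^ ((n : ℝ) * (1 - δ) - δ) * (Real.Gamma (1 - δ)) ^ (n + 1) /
        Real.Gamma (((n : ℝ) + 1) * (1 - δ)) := by
  have hb : (0:ℝ) < 1 - δ := by linarith [hδ.2]
  have hΓb : Real.Gamma (1 - δ) ≠ 0 := (Real.Gamma_pos_of_pos hb).ne'
  induction n with
  | zero =>
    intro t ht
    rw [simplexIter']
    push_cast
    rw [show (0:ℝ) * (1 - δ) - δ = -δ by ring, show ((0:ℝ) + 1) * (1 - δ) = 1 - δ by ring]
    field_simp
  | succ n ih =>
    intro t ht
    have hA : (0:ℝ) < ((n : ℝ) + 1) * (1 - δ) := by positivity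
    have hΓA : Real.Gamma (((n : ℝ) + 1) * (1 - δ)) ≠ 0 := (Real.Gamma_pos_of_pos hA).ne'
    have step : simplexIter' δ (n + 1) t =
        ∫ r in (0:ℝ)..t, (r ^ (((n : ℝ) + 1) * (1 - δ) - 1) * (t - r) ^ ((1 - δ) - 1)) *
          ((Real.Gamma (1 - δ)) ^ (n + 1) / Real.Gamma (((n : ℝ) + 1) * (1 - δ))) := by
      rw [simplexIter', intervalIntegral.integral_of_le ht.le,
        intervalIntegral.integral_of_le ht.le]
      apply MeasureTheory.setIntegral_congr_fun measurableSet_Ioc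
      intro r hr
      show (t - r) ^ (-δ) * simplexIter' δ n r = _
      rw [ih r hr.1, show ((n : ℝ) + 1) * (1 - δ) - 1 = (n : ℝ) * (1 - δ) - δ by ring,
        show (1 - δ) - 1 = -δ by ring]
      ring
    rw [step, intervalIntegral.integral_mul_const, real_beta hA hb ht,
      show (((n : ℝ) + 1) * (1 - δ)) + (1 - δ) = ((n : ℝ) + 1 + 1) * (1 - δ) by ring]
    push_cast
    rw [show ((n:ℝ) + 1 + 1) * (1 - δ) - 1 = ((n:ℝ) + 1) * (1 - δ) - δ by ring]
    have hΓc : Real.Gamma (((n:ℝ) + 1 + 1) * (1 - δ)) ≠ 0 := by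
      apply (Real.Gamma_pos_of_pos _).ne'
      positivity
    field_simp
    ring

theorem stmt1 (δ t : ℝ) (hδ : δ ∈ Set.Ioo (0:ℝ) 1) (ht : 0 < t) (n : ℕ) (hn : 1 ≤ n) :
    simplexIter' δ n t =
      t ^ ((n : ℝ) * (1 - δ) - δ) * (Real.Gamma (1 - δ)) ^ (n + 1) /
        Real.Gamma (((n : ℝ) + 1) * (1 - δ)) := by
  exact simplexIter'_key δ hδ n t ht
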